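/- Let R be a Dedekind domain with finite class group G and let α be an irreducible element of R with (α) = 𝔭₁⋯𝔭_k a product of prime ideals. Then k ≤ D(G), where D(G) is the Davenport constant of G. -/

import Mathlib

open nonZeroDivisors

/-- The Davenport constant of a commutative group `G`: the supremum of lengths of
minimal zero-(product-one-)sequences over `G`. -/
noncomputable def davenportConstant (G : Type*) [CommGroup G] : ℕ :=
  sSup {n : ℕ | ∃ g : Fin n → G, ∏ i, g i = 1 ∧
    ∀ S : Finset (Fin n), S.Nonempty → S ≠ Finset.univ → ∏ i ∈ S, g i ≠ 1}

lemma davenport_aux {G : Type*} [CommGroup G] {n : ℕ} (g : Fin n → G)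
    (hmin : ∀ S : Finset (Fin n), S.Nonempty → S ≠ Finset.univ → ∏ i ∈ S, g i ≠ 1)
    {a b : Fin n} (h : (a : ℕ) < (b : ℕ))
    (heq : (∏ i ∈ Finset.univ.filter (fun i : Fin n => (i : ℕ) < (a : ℕ)), g i)
         = (∏ i ∈ Finset.univ.filter (fun i : Fin n => (i : ℕ) < (b : ℕ)), g i)) :
    False := by
  classical
  set S : Finset (Fin n) :=
    Finset.univ.filter (fun i : Fin n => (a : ℕ) ≤ (i : ℕ) ∧ (i : ℕ) < (b : ℕ)) with hS
  have hsplit : (∏ i ∈ Finset.univ.filter (fun i : Fin n => (i : ℕ) < (b : ℕ)), g i)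
      = (∏ i ∈ Finset.univ.filter (fun i : Fin n => (i : ℕ) < (a : ℕ)), g i)
        * ∏ i ∈ S, g i := by
    rw [← Finset.prod_union]
    · congr 1
      ext i
      simp only [Finset.mem_filter, Finset.mem_union, Finset.mem_univ, true_and, hS]
      omega
    · rw [Finset.disjoint_left]
      intro i hi hi'
      simp only [Finset.mem_filter, hS, Finset.mem_univ, true_and] at hi hi'
      omega
  rw [← heq] at hsplit
  have hSone : ∏ i ∈ S, g i = 1 := by
    have := hsplit.symm
    rwa [mul_eq_left] at this
  refine hmin S ⟨a, by simp [hS]; omega⟩ ?_ hSone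
  intro hSuniv
  have : b ∈ S := hSuniv ▸ Finset.mem_univ b
  simp [hS] at this

lemma davenport_bddAbove (G : Type*) [CommGroup G] [Finite G] :
    BddAbove {n : ℕ | ∃ g : Fin n → G, ∏ i, g i = 1 ∧
      ∀ S : Finset (Fin n), S.Nonempty → S ≠ Finset.univ → ∏ i ∈ S, g i ≠ 1} := by
  classical
  have : Fintype G := Fintype.ofFinite G
  refine ⟨Fintype.card G, fun n hn => ?_⟩
  obtain ⟨g, hprod, hmin⟩ := hn
  by_contra hlt
  push_neg at hlt
  obtain ⟨a, b, hab, heq⟩ := Fintype.exists_ne_map_eq_of_card_lt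
    (fun j : Fin n => ∏ i ∈ Finset.univ.filter (fun i : Fin n => (i : ℕ) < (j : ℕ)), g i)
    (by simpa using hlt)
  rcases lt_or_gt_of_ne (Fin.val_ne_of_ne hab) with h | h
  · exact davenport_aux g hmin h heq
  · exact davenport_aux g hmin h heq.symm

theorem irreducible_prime_factor_count_le_davenport
    {R : Type*} [CommRing R] [IsDomain R] [IsDedekindDomain R]
    [Finite (ClassGroup R)]
    (α : R) (hα : Irreducible α)
    (k : ℕ) (𝔭 : Fin k → Ideal R)
    (hprime : ∀ i, (𝔭 i).IsPrime) (hbot : ∀ i, 𝔭 i ≠ ⊥)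
    (hfac : Ideal.span {α} = ∏ i, 𝔭 i) :
    k ≤ davenportConstant (ClassGroup R) := by
  classical
  refine le_csSup (davenport_bddAbove _) ?_
  have hmem : ∀ i, 𝔭 i ∈ (Ideal R)⁰ := fun i =>
    mem_nonZeroDivisors_of_ne_zero (by simpa using hbot i)
  set P : Fin k → (Ideal R)⁰ := fun i => ⟨𝔭 i, hmem i⟩ with hP
  have hcoe : ∀ T : Finset (Fin k), ((∏ i ∈ T, P i : (Ideal R)⁰) : Ideal R) = ∏ i ∈ T, 𝔭 i := by
    intro T
    push_cast [hP]
    rfl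
  refine ⟨fun i => ClassGroup.mk0 (P i), ?_, ?_⟩
  · rw [← map_prod]
    refine (ClassGroup.mk0_eq_one_iff (∏ i, P i).2).mpr ?_
    rw [hcoe, ← hfac]
    exact ⟨α, rfl⟩
  · intro S hSne hSuniv hSone
    rw [← map_prod] at hSone
    obtain ⟨β, hβ⟩ := (ClassGroup.mk0_eq_one_iff (∏ i ∈ S, P i).2).mp hSone
    have hScone : ClassGroup.mk0 (∏ i ∈ Sᶜ, P i) = 1 := by
      have h2 : ClassGroup.mk0 ((∏ i ∈ S, P i) * (∏ i ∈ Sᶜ, P i)) = 1 := by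
        rw [Finset.prod_mul_prod_compl]
        refine (ClassGroup.mk0_eq_one_iff (∏ i, P i).2).mpr ?_
        rw [hcoe, ← hfac]; exact ⟨α, rfl⟩
      rwa [MonoidHom.map_mul, hSone, one_mul] at h2
    obtain ⟨γ, hγ⟩ := (ClassGroup.mk0_eq_one_iff (∏ i ∈ Sᶜ, P i).2).mp hScone
    -- α associated to β * γ
    have hspan : Ideal.span {α} = Ideal.span {β * γ} := by
      rw [hfac, ← Finset.prod_mul_prod_compl S 𝔭, ← hcoe, ← hcoe, hβ, hγ,
        Ideal.submodule_span_eq, Ideal.submodule_span_eq,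
        Ideal.span_singleton_mul_span_singleton]
    have hassoc : Associated α (β * γ) := by
      rwa [← Ideal.span_singleton_eq_span_singleton]
    have hirr : Irreducible (β * γ) := hassoc.irreducible hα
    -- neither β nor γ is a unit
    have hnotunit : ∀ (T : Finset (Fin k)) (δ : R),
        T.Nonempty → ((∏ i ∈ T, P i : (Ideal R)⁰) : Ideal R) = Ideal.span {δ} →
        ¬ IsUnit δ := by
      intro T δ ⟨i, hi⟩ hδ hu
      have : Ideal.span {δ} = ⊤ := Ideal.span_singleton_eq_top.mpr hu
      rw [this, hcoe] at hδ
      have hle : (∏ j ∈ T, 𝔭 j) ≤ 𝔭 i := (Ideal.prod_le_inf).trans (Finset.inf_le hi)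
      rw [hδ] at hle
      exact (hprime i).ne_top (top_le_iff.mp hle)
    have hβu := hnotunit S β hSne hβ
    have hγu := hnotunit Sᶜ γ (Finset.nonempty_iff_ne_empty.mpr fun h => hSuniv ((Finset.compl_eq_empty_iff _).mp h)) hγ
    rcases hirr.isUnit_or_isUnit rfl with h | h
    · exact hβu h
    · exact hγu h
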